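/- Let a11, a12, a21, a22, b1, b2 be positive reals with d12 := a11*a22 - a12*a21 > 0 and a12*b2 = a22*b1. Define V(x1, x2) = x1^(a22) * x2^(-a12) on (0,∞)². Then V is positive on (0,∞)², and its derivative along the Lotka-Volterra flow satisfies V̇(x1,x2) = -d12 * x1^(a22+1) * x2^(-a12) < 0 for all (x1,x2) ∈ (0,∞)². -/

import Mathlib

/-- The vector field of the 2D competitive Lotka-Volterra system. -/
noncomputable def LV (a11 a12 a21 a22 b1 b2 : ℝ) : ℝ × ℝ → ℝ × ℝ :=
  fun p => (p.1 * (b1 - a11 * p.1 - a12 * p.2), p.2 * (b2 - a21 * p.1 - a22 * p.2))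

theorem stmt_15 (a11 a12 a21 a22 b1 b2 : ℝ)
    (ha11 : 0 < a11) (ha12 : 0 < a12) (ha21 : 0 < a21) (ha22 : 0 < a22)
    (hb1 : 0 < b1) (hb2 : 0 < b2)
    (hd12 : 0 < a11 * a22 - a12 * a21)
    (hd122 : a12 * b2 = a22 * b1)
    (V : ℝ × ℝ → ℝ)
    (hV : V = fun p => p.1 ^ a22 * p.2 ^ (-a12)) :
    ∀ x1 x2 : ℝ, 0 < x1 → 0 < x2 →
      0 < V (x1, x2) ∧
      fderiv ℝ V (x1, x2) (LV a11 a12 a21 a22 b1 b2 (x1, x2))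
        = -(a11 * a22 - a12 * a21) * x1 ^ (a22 + 1) * x2 ^ (-a12) ∧
      fderiv ℝ V (x1, x2) (LV a11 a12 a21 a22 b1 b2 (x1, x2)) < 0 := by
  intro x1 x2 hx1 hx2
  have hVpos : 0 < V (x1, x2) := by
    rw [hV]
    exact mul_pos (Real.rpow_pos_of_pos hx1 _) (Real.rpow_pos_of_pos hx2 _)
  have h1 : HasFDerivAt (fun p : ℝ × ℝ => p.1 ^ a22)
      ((a22 * x1 ^ (a22 - 1)) • (ContinuousLinearMap.fst ℝ ℝ ℝ)) (x1, x2) :=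
    (hasFDerivAt_fst (p := ((x1, x2) : ℝ × ℝ))).rpow_const (Or.inl hx1.ne')
  have h2 : HasFDerivAt (fun p : ℝ × ℝ => p.2 ^ (-a12))
      ((-a12 * x2 ^ (-a12 - 1)) • (ContinuousLinearMap.snd ℝ ℝ ℝ)) (x1, x2) :=
    (hasFDerivAt_snd (p := ((x1, x2) : ℝ × ℝ))).rpow_const (Or.inl hx2.ne')
  have hVd : HasFDerivAt V
      (x1 ^ a22 • ((-a12 * x2 ^ (-a12 - 1)) • (ContinuousLinearMap.snd ℝ ℝ ℝ))
        + x2 ^ (-a12) • ((a22 * x1 ^ (a22 - 1)) • (ContinuousLinearMap.fst ℝ ℝ ℝ))) (x1, x2) := by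
    rw [hV]; exact h1.mul h2
  have hfd := hVd.fderiv
  rw [hfd]
  set v1 := x1 * (b1 - a11 * x1 - a12 * x2) with hv1
  set v2 := x2 * (b2 - a21 * x1 - a22 * x2) with hv2
  have happ : (x1 ^ a22 • ((-a12 * x2 ^ (-a12 - 1)) • (ContinuousLinearMap.snd ℝ ℝ ℝ))
        + x2 ^ (-a12) • ((a22 * x1 ^ (a22 - 1)) • (ContinuousLinearMap.fst ℝ ℝ ℝ)))
        (LV a11 a12 a21 a22 b1 b2 (x1, x2))
      = x1 ^ a22 * (-a12 * x2 ^ (-a12 - 1)) * v2 + x2 ^ (-a12) * (a22 * x1 ^ (a22 - 1)) * v1 := by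
    simp [LV, mul_assoc]
    rw [hv1, hv2]
  have e1 : x1 ^ (a22 - 1) * x1 = x1 ^ a22 := by
    rw [← Real.rpow_add_one hx1.ne']; norm_num
  have e2 : x2 ^ (-a12 - 1) * x2 = x2 ^ (-a12) := by
    rw [← Real.rpow_add_one hx2.ne']; norm_num
  have e3 : x1 ^ (a22 + 1) = x1 ^ a22 * x1 := by
    rw [Real.rpow_add hx1, Real.rpow_one]
  have key : x1 ^ a22 * (-a12 * x2 ^ (-a12 - 1)) * v2 + x2 ^ (-a12) * (a22 * x1 ^ (a22 - 1)) * v1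
      = -(a11 * a22 - a12 * a21) * x1 ^ (a22 + 1) * x2 ^ (-a12) := by
    rw [hv1, hv2, e3]
    have : x1 ^ a22 * (-a12 * x2 ^ (-a12 - 1)) * (x2 * (b2 - a21 * x1 - a22 * x2))
        = x1 ^ a22 * (-a12) * (x2 ^ (-a12 - 1) * x2) * (b2 - a21 * x1 - a22 * x2) := by ring
    rw [this, e2]
    have : x2 ^ (-a12) * (a22 * x1 ^ (a22 - 1)) * (x1 * (b1 - a11 * x1 - a12 * x2))
        = x2 ^ (-a12) * a22 * (x1 ^ (a22 - 1) * x1) * (b1 - a11 * x1 - a12 * x2) := by ring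
    rw [this, e1]
    linear_combination (-(x1 ^ a22 * x2 ^ (-a12))) * hd122
  refine ⟨hVpos, by rw [happ, key], ?_⟩
  rw [happ, key]
  have hp1 := Real.rpow_pos_of_pos hx1 (a22 + 1)
  have hp2 := Real.rpow_pos_of_pos hx2 (-a12)
  have := mul_pos (mul_pos hd12 hp1) hp2
  linarith
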